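/- For relatively prime integers 1 ≤ d ≤ k, the digraph C(k,d) is a core: every acyclic homomorphism from C(k,d) to itself is a bijection. -/

import Mathlib

/-- Induced (restricted) arc relation on a vertex set `S`. -/
def Restrict {V : Type*} (A : V → V → Prop) (S : Set V) : V → V → Prop :=
  fun u v => u ∈ S ∧ v ∈ S ∧ A u v

/-- A digraph (arc relation) is acyclic if it has no directed cycle,
i.e. no vertex reaches itself by a nonempty directed walk. -/
def IsAcyclic {V : Type*} (A : V → V → Prop) : Prop :=
  ∀ v, ¬ Relation.TransGen A v v

/-- The subdigraph induced by `S` is acyclic. -/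
def AcyclicOn {V : Type*} (A : V → V → Prop) (S : Set V) : Prop :=
  IsAcyclic (Restrict A S)

/-- Acyclic homomorphism of digraphs. -/
def IsAcyclicHom {V W : Type*} (A : V → V → Prop) (B : W → W → Prop) (φ : V → W) : Prop :=
  (∀ w : W, AcyclicOn A (φ ⁻¹' {w})) ∧ ∀ u v, A u v → φ u = φ v ∨ B (φ u) (φ v)

/-- Automorphism of a digraph. -/
def IsDigraphAuto {W : Type*} (B : W → W → Prop) (π : W ≃ W) : Prop :=
  ∀ u v, B u v ↔ B (π u) (π v)

/-- `D` (with arcs `A`) is uniquely `C`-colourable (`C` with arcs `B`). -/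
def UniquelyColourable {V W : Type*} (A : V → V → Prop) (B : W → W → Prop) : Prop :=
  (∃ φ : V → W, IsAcyclicHom A B φ ∧ Function.Surjective φ) ∧
  ∀ φ ψ : V → W, IsAcyclicHom A B φ → IsAcyclicHom A B ψ →
    ∃ π : W ≃ W, IsDigraphAuto B π ∧ φ = ⇑π ∘ ψ

/-- Acyclic-sink set: induces an acyclic subdigraph and emits no arcs. -/
def IsAcyclicSink {V : Type*} (A : V → V → Prop) (S : Set V) : Prop :=
  AcyclicOn A S ∧ ∀ u ∈ S, ∀ v ∉ S, ¬ A u v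

/-- The circular digraph `C(k,d)` on `ℤ_k`: arc `i → j` iff `(j - i) mod k ∈ {d, …, k-1}`. -/
def CircArc (k d : ℕ) : Fin k → Fin k → Prop :=
  fun i j => d ≤ (j.val + k - i.val) % k

/-- There is a directed cycle of length `ℓ`. -/
def HasCycleOfLength {V : Type*} (A : V → V → Prop) (ℓ : ℕ) : Prop :=
  ∃ l : List V, l.length = ℓ ∧ l.Nodup ∧ List.Chain' A l ∧
    ∀ h : l ≠ [], A (l.getLast h) (l.head h)

namespace CircCoreAux

variable {n : ℕ}

open Fin.NatCast Fin.CommRing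

lemma sub_val (a b : Fin (n+1)) : (a - b).val = (a.val + (n+1) - b.val) % (n+1) := by
  simp only [Fin.sub_def]
  congr 1
  omega

lemma circArc_iff (d : ℕ) (i j : Fin (n+1)) :
    CircArc (n+1) d i j ↔ d ≤ (j - i).val := by
  rw [CircArc, sub_val]

lemma mod_cases {m x : ℕ} (_hm : 0 < m) (hx : x < 2*m) :
    (x % m = x ∧ x < m) ∨ (x % m = x - m ∧ m ≤ x) := by
  rcases Nat.lt_or_ge x m with h | h
  · exact Or.inl ⟨Nat.mod_eq_of_lt h, h⟩
  · refine Or.inr ⟨?_, h⟩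
    rw [Nat.mod_eq_sub_mod h, Nat.mod_eq_of_lt (by omega)]

lemma height_nat {m d A X B : ℕ} (h : (A + X) % m = B) (hA : A < d) (hB : B < d)
    (hX : d ≤ X) (hXm : X < m) (hAm : A < m) : B < A := by
  have hx : A + X < 2*m := by omega
  rcases mod_cases (show 0 < m by omega) hx with ⟨h', h''⟩ | ⟨h', h''⟩ <;> omega

/-- Height strictly decreases along arcs within a value window. -/
lemma height_lt {d : ℕ} (c w w' : Fin (n+1)) (hA : (w - c).val < d) (hB : (w' - c).val < d)
    (harc : d ≤ (w' - w).val) : (w' - c).val < (w - c).val := by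
  have h2 : (w - c) + (w' - w) = w' - c := by ring
  have h1 : ((w - c).val + (w' - w).val) % (n+1) = (w' - c).val := by
    rw [← Fin.val_add, h2]
  exact height_nat h1 hA hB harc (w' - w).is_lt (w - c).is_lt

end CircCoreAux

open Fin.NatCast Fin.CommRing in
theorem circ_core_of_coprime (k d : ℕ) (hd : 1 ≤ d) (hk : d ≤ k)
    (hcop : Nat.Coprime k d) :
    ∀ φ : Fin k → Fin k, IsAcyclicHom (CircArc k d) (CircArc k d) φ →
      Function.Bijective φ := by
  intro φ hφ
  rw [← Finite.injective_iff_bijective]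
  -- trivial case d = k (then k = 1)
  rcases eq_or_lt_of_le hk with heq | hdk
  · subst heq
    have hk1 : d = 1 := by
      have := Nat.gcd_self d
      unfold Nat.Coprime at hcop
      omega
    subst hk1
    intro i j _
    exact Subsingleton.elim i j
  -- main case: d < k; write k = n + 1
  obtain ⟨n, rfl⟩ : ∃ n, k = n + 1 := ⟨k - 1, by omega⟩
  open CircCoreAux in
  -- the value-window preimages lie in position d-intervals
  have interval : ∀ c : Fin (n+1), ∃ a : Fin (n+1),
      ∀ i : Fin (n+1), (φ i - c).val < d → (i - a).val < d := by
    intro c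
    by_contra hS
    push_neg at hS
    -- every element of the window preimage has an out-neighbour in it
    have h1 : ∀ i : Fin (n+1), ∃ j : Fin (n+1), (φ j - c).val < d ∧ d ≤ (j - i).val := by
      intro i
      obtain ⟨j, hj1, hj2⟩ := hS i
      exact ⟨j, hj1, hj2⟩
    classical
    set f : Fin (n+1) → Fin (n+1) := fun i => (h1 i).choose with hf_def
    have hf : ∀ i, (φ (f i) - c).val < d ∧ d ≤ (f i - i).val := fun i => (h1 i).choose_spec
    set g : ℕ → Fin (n+1) := fun t => f^[t] (f 0) with hg_def
    have hg : ∀ t, (φ (g t) - c).val < d := by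
      intro t
      induction t with
      | zero => exact (hf 0).1
      | succ t ih =>
        have : g (t+1) = f (g t) := Function.iterate_succ_apply' f t (f 0)
        rw [this]
        exact (hf (g t)).1
    set R : Fin (n+1) → Fin (n+1) → Prop := fun u v =>
      (φ u - c).val < d ∧ (φ v - c).val < d ∧ CircArc (n+1) d u v with hR_def
    have hstep : ∀ t, R (g t) (g (t+1)) := by
      intro t
      have he : g (t+1) = f (g t) := Function.iterate_succ_apply' f t (f 0)
      refine ⟨hg t, hg (t+1), ?_⟩
      rw [circArc_iff, he]
      exact (hf (g t)).2
    have htg : ∀ s p : ℕ, Relation.TransGen R (g s) (g (s + 1 + p)) := by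
      intro s p
      induction p with
      | zero => exact Relation.TransGen.single (hstep s)
      | succ p ih =>
        have : s + 1 + (p + 1) = (s + 1 + p) + 1 := by omega
        rw [this]
        exact Relation.TransGen.tail ih (hstep _)
    obtain ⟨s, t, hne, heq⟩ := Finite.exists_ne_map_eq_of_infinite g
    have hloop : ∃ v, Relation.TransGen R v v := by
      rcases Nat.lt_or_gt_of_ne hne with h | h
      · obtain ⟨p, rfl⟩ : ∃ p, t = s + 1 + p := ⟨t - s - 1, by omega⟩
        exact ⟨g s, heq ▸ htg s p⟩
      · obtain ⟨p, rfl⟩ : ∃ p, s = t + 1 + p := ⟨s - t - 1, by omega⟩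
        exact ⟨g t, heq ▸ htg t p⟩
    obtain ⟨v, hv⟩ := hloop
    -- push the loop through φ
    have T1 : ∀ i j, Relation.TransGen R i j →
        (φ j - c).val < (φ i - c).val ∨
        (φ i = φ j ∧ Relation.TransGen (Restrict (CircArc (n+1) d) (φ ⁻¹' {φ i})) i j) := by
      intro i j hij
      induction hij with
      | @single b hb =>
        obtain ⟨hSi, hSb, harcib⟩ := hb
        rcases hφ.2 _ _ harcib with heq2 | hB
        · right
          refine ⟨heq2, Relation.TransGen.single ⟨rfl, ?_, harcib⟩⟩
          simp [Set.mem_preimage, heq2]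
        · exact Or.inl (height_lt c (φ i) (φ _) hSi hSb ((circArc_iff d _ _).mp hB))
      | @tail b j' h1' hstep ih =>
        obtain ⟨hSb, hSj, harcbj⟩ := hstep
        rcases hφ.2 _ _ harcbj with heq2 | hB
        · rcases ih with hlt | ⟨heq3, htg3⟩
          · left; rw [← heq2]; exact hlt
          · right
            refine ⟨heq3.trans heq2, Relation.TransGen.tail htg3 ⟨?_, ?_, harcbj⟩⟩
            · simp [Set.mem_preimage, heq3]
            · simp [Set.mem_preimage, heq3, heq2]
        · have hlt2 : (φ j' - c).val < (φ b - c).val :=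
            height_lt c (φ b) (φ j') hSb hSj ((circArc_iff d _ _).mp hB)
          rcases ih with hlt | ⟨heq3, _⟩
          · exact Or.inl (hlt2.trans hlt)
          · left; rw [heq3]; exact hlt2
    rcases T1 v v hv with hlt | ⟨_, hcyc⟩
    · exact lt_irrefl _ hlt
    · exact hφ.1 (φ v) v hcyc
  classical
  -- the window preimages as finsets
  set Sf : Fin (n+1) → Finset (Fin (n+1)) :=
    fun c => Finset.univ.filter (fun i => (φ i - c).val < d) with hSf_def
  have card_le : ∀ c, (Sf c).card ≤ d := by
    intro c
    obtain ⟨a, ha⟩ := interval c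
    calc (Sf c).card ≤ (Finset.range d).card := by
          apply Finset.card_le_card_of_injOn (fun i => (i - a).val)
          · intro i hi
            simp only [Finset.mem_coe, hSf_def, Finset.mem_filter] at hi
            exact Finset.mem_range.mpr (ha i hi.2)
          · intro i _ j _ hij
            have : i - a = j - a := Fin.val_injective hij
            have h2 : a + (i - a) = a + (j - a) := by rw [this]
            simpa using h2
      _ = d := Finset.card_range d
  have count_c : ∀ w : Fin (n+1),
      (Finset.univ.filter (fun c => (w - c).val < d)).card = d := by
    intro w
    conv_rhs => rw [← Finset.card_range d]
    apply Finset.card_bij (fun c _ => (w - c).val)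
    · intro c hc
      simp only [Finset.mem_filter] at hc
      exact Finset.mem_range.mpr hc.2
    · intro c₁ h₁ c₂ h₂ hcc
      have : w - c₁ = w - c₂ := Fin.val_injective hcc
      have h2 : w - (w - c₁) = w - (w - c₂) := by rw [this]
      simpa using h2
    · intro t ht
      refine ⟨w - (t : Fin (n+1)), ?_, ?_⟩
      · have hv : ((t : Fin (n+1))).val = t := Fin.val_cast_of_lt (by
          have := Finset.mem_range.mp ht; omega)
        simp only [Finset.mem_filter, Finset.mem_univ, true_and, sub_sub_cancel, hv]
        exact Finset.mem_range.mp ht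
      · have hv : ((t : Fin (n+1))).val = t := Fin.val_cast_of_lt (by
          have := Finset.mem_range.mp ht; omega)
        rw [sub_sub_cancel, hv]
  have sum_eq : ∑ c : Fin (n+1), (Sf c).card = (n+1) * d := by
    have : ∀ c : Fin (n+1), (Sf c).card =
        ∑ i : Fin (n+1), if (φ i - c).val < d then 1 else 0 :=
      fun c => Finset.card_filter _ _
    calc ∑ c : Fin (n+1), (Sf c).card
        = ∑ c : Fin (n+1), ∑ i : Fin (n+1), if (φ i - c).val < d then 1 else 0 := by
          exact Finset.sum_congr rfl (fun c _ => this c)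
      _ = ∑ i : Fin (n+1), ∑ c : Fin (n+1), if (φ i - c).val < d then 1 else 0 :=
          Finset.sum_comm
      _ = ∑ i : Fin (n+1), d := by
          refine Finset.sum_congr rfl (fun i _ => ?_)
          rw [← Finset.card_filter]
          exact count_c (φ i)
      _ = (n+1) * d := by
          rw [Finset.sum_const, Finset.card_univ, Fintype.card_fin, smul_eq_mul]
  have each_eq : ∀ c, (Sf c).card = d := by
    by_contra hcon
    push_neg at hcon
    obtain ⟨c₀, hc₀⟩ := hcon
    have hlt : (Sf c₀).card < d := lt_of_le_of_ne (card_le c₀) hc₀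
    have : ∑ c : Fin (n+1), (Sf c).card < ∑ _c : Fin (n+1), d :=
      Finset.sum_lt_sum (fun c _ => card_le c) ⟨c₀, Finset.mem_univ c₀, hlt⟩
    rw [sum_eq, Finset.sum_const, Finset.card_univ, Fintype.card_fin, smul_eq_mul] at this
    exact absurd this (lt_irrefl _)
  -- fibers
  set fib : Fin (n+1) → Finset (Fin (n+1)) :=
    fun w => Finset.univ.filter (fun i => φ i = w) with hfib_def
  have hn1 : 1 ≤ n := by omega
  have h1v : (1 : Fin (n+1)).val = 1 := by
    rw [show (1 : Fin (n+1)) = ((1:ℕ) : Fin (n+1)) by norm_cast, Fin.val_natCast]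
    exact Nat.mod_eq_of_lt (by omega)
  have hsub1 : ∀ u : Fin (n+1), (u - 1).val = if u.val = 0 then n else u.val - 1 := by
    intro u
    rw [CircCoreAux.sub_val, h1v]
    rcases Nat.eq_zero_or_pos u.val with h | h
    · rw [if_pos h]
      have e : u.val + (n+1) - 1 = n := by omega
      rw [e, Nat.mod_eq_of_lt (by omega)]
    · rw [if_neg (by omega)]
      have e : u.val + (n+1) - 1 = (u.val - 1) + (n+1) := by omega
      rw [e, Nat.add_mod_right, Nat.mod_eq_of_lt (by have := u.is_lt; omega)]
  have hdv : ((d : ℕ) : Fin (n+1)).val = d := Fin.val_cast_of_lt hdk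
  -- fiber decomposition of windows
  have fib_step : ∀ c : Fin (n+1), (fib c).card = (fib (c + (d : Fin (n+1)))).card := by
    intro c
    have e1 : Sf c \ Sf (c+1) = fib c := by
      ext i
      simp only [hSf_def, hfib_def, Finset.mem_sdiff, Finset.mem_filter, Finset.mem_univ,
        true_and, not_lt]
      have hsub : φ i - (c + 1) = (φ i - c) - 1 := by ring
      rw [hsub, hsub1]
      constructor
      · rintro ⟨hlt, hge⟩
        split_ifs at hge with h0
        · have : φ i - c = 0 := by
            apply Fin.val_injective; simpa using h0
          have := sub_eq_zero.mp this
          exact this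
        · omega
      · intro h
        have h0 : (φ i - c).val = 0 := by rw [h]; simp
        rw [if_pos h0, h0]
        exact ⟨by omega, by omega⟩
    have e2 : Sf (c+1) \ Sf c = fib (c + (d : Fin (n+1))) := by
      ext i
      simp only [hSf_def, hfib_def, Finset.mem_sdiff, Finset.mem_filter, Finset.mem_univ,
        true_and, not_lt]
      have hsub : φ i - (c + 1) = (φ i - c) - 1 := by ring
      rw [hsub, hsub1]
      constructor
      · rintro ⟨hlt, hge⟩
        split_ifs at hlt with h0
        · omega
        · have hv : (φ i - c).val = d := by omega
          have : φ i - c = ((d:ℕ) : Fin (n+1)) := by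
            apply Fin.val_injective; rw [hv, hdv]
          have : φ i = c + ((d:ℕ) : Fin (n+1)) := by
            rw [← this]; ring
          exact this
      · intro h
        have hv : (φ i - c).val = d := by
          rw [h]
          have : c + ((d:ℕ) : Fin (n+1)) - c = ((d:ℕ) : Fin (n+1)) := by ring
          rw [this, hdv]
        rw [if_neg (by omega), hv]
        exact ⟨by omega, by omega⟩
    have d1 : (Sf c ∩ Sf (c+1)).card + (Sf c \ Sf (c+1)).card = (Sf c).card :=
      Finset.card_inter_add_card_sdiff _ _
    have d2 : (Sf (c+1) ∩ Sf c).card + (Sf (c+1) \ Sf c).card = (Sf (c+1)).card :=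
      Finset.card_inter_add_card_sdiff _ _
    rw [Finset.inter_comm] at d2
    rw [e1] at d1
    rw [e2] at d2
    rw [each_eq c] at d1
    rw [each_eq (c+1)] at d2
    omega
  -- iterate and use coprimality: all fibers have the same size
  have fib_iter : ∀ (t : ℕ) (c : Fin (n+1)),
      (fib c).card = (fib (c + ((t * d : ℕ) : Fin (n+1)))).card := by
    intro t
    induction t with
    | zero => intro c; simp
    | succ t ih =>
      intro c
      have e : (((t+1) * d : ℕ) : Fin (n+1)) = ((t * d : ℕ) : Fin (n+1)) + ((d:ℕ) : Fin (n+1)) := by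
        push_cast [add_mul, one_mul]
        ring
      rw [e, ← add_assoc]
      exact (ih c).trans (fib_step _)
  have cast_surj : ∀ e : Fin (n+1), ∃ t : ℕ, ((t * d : ℕ) : Fin (n+1)) = e := by
    have hinj : Set.InjOn (fun t : ℕ => ((t * d : ℕ) : Fin (n+1))) (Finset.range (n+1)) := by
      intro t₁ h₁ t₂ h₂ he
      simp only [Finset.coe_range, Set.mem_Iio] at h₁ h₂
      have hm : (t₁ * d) % (n+1) = (t₂ * d) % (n+1) := by
        have h3 := congrArg Fin.val he
        rwa [Fin.val_natCast, Fin.val_natCast] at h3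
      have : t₁ % (n+1) = t₂ % (n+1) :=
        Nat.ModEq.cancel_right_of_coprime (by simpa [Nat.Coprime] using hcop) hm
      rw [Nat.mod_eq_of_lt h₁, Nat.mod_eq_of_lt h₂] at this
      exact this
    have himg : (Finset.range (n+1)).image (fun t : ℕ => ((t * d : ℕ) : Fin (n+1))) =
        Finset.univ := by
      apply Finset.eq_univ_of_card
      rw [Finset.card_image_of_injOn hinj, Finset.card_range, Fintype.card_fin]
    intro e
    have : e ∈ (Finset.range (n+1)).image (fun t : ℕ => ((t * d : ℕ) : Fin (n+1))) := by
      rw [himg]; exact Finset.mem_univ e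
    obtain ⟨t, _, ht⟩ := Finset.mem_image.mp this
    exact ⟨t, ht⟩
  have fib_all : ∀ c c' : Fin (n+1), (fib c).card = (fib c').card := by
    intro c c'
    obtain ⟨t, ht⟩ := cast_surj (c' - c)
    have := fib_iter t c
    have e2 : c + (c' - c) = c' := by ring
    rwa [ht, e2] at this
  have sum_fib : ∑ c : Fin (n+1), (fib c).card = n + 1 := by
    have h := Finset.card_eq_sum_card_fiberwise
      (f := φ) (s := Finset.univ) (t := Finset.univ) (fun x _ => Finset.mem_univ (φ x))
    simp only [Finset.card_univ, Fintype.card_fin] at h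
    exact h.symm
  have fib_one : ∀ c, (fib c).card = 1 := by
    intro c
    have : ∑ c' : Fin (n+1), (fib c').card = (n+1) * (fib c).card := by
      calc ∑ c' : Fin (n+1), (fib c').card = ∑ _c' : Fin (n+1), (fib c).card :=
            Finset.sum_congr rfl (fun c' _ => fib_all c' c)
        _ = (n+1) * (fib c).card := by
            rw [Finset.sum_const, Finset.card_univ, Fintype.card_fin, smul_eq_mul]
    rw [sum_fib] at this
    have h2 : (n+1) * (fib c).card = (n+1) * 1 := by omega
    exact Nat.eq_of_mul_eq_mul_left (by omega) h2
  intro i j hij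
  have hi : i ∈ fib (φ i) := by simp [hfib_def]
  have hj : j ∈ fib (φ i) := by simp [hfib_def, hij]
  exact Finset.card_le_one.mp (le_of_eq (fib_one (φ i))) i hi j hj
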